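/- Let F be a field, m and E finite types, D a matrix over F with rows indexed by m and columns indexed by E; for S ⊆ E let r(S) be the rank of the submatrix of columns in S, and let T_D(X,Y) = Σ_{S ⊆ E} X^{r(E) − r(S)} · Y^{|S| − r(S)}. If σ ∈ E is a bridge of D, i.e., r(E ∖ {σ}) = r(E) − 1, then T_D(X,Y) = (X + 1) · T_{D/σ}(X,Y), where D/σ is the contraction of D by σ. -/

import Mathlib

open MvPolynomial

/-- The rank of the family of vectors `(v σ)_{σ ∈ S}`. -/
noncomputable def famRank (F : Type*) [Field F] {N : Type*} [AddCommGroup N] [Module F N]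
    {E : Type*} (v : E → N) (S : Finset E) : ℕ :=
  Module.finrank F (Submodule.span F (v '' (S : Set E)))

/-- The corank–nullity (Tutte–Krushkal–Renardy) polynomial of a family of vectors:
`T_v(X,Y) = Σ_{S ⊆ E} X^(r(E) − r(S)) · Y^(|S| − r(S))`. -/
noncomputable def famTutte (F : Type*) [Field F] {N : Type*} [AddCommGroup N] [Module F N]
    {E : Type*} [Fintype E] (v : E → N) : MvPolynomial (Fin 2) ℤ :=
  ∑ S : Finset E,
    X 0 ^ (famRank F v Finset.univ - famRank F v S) * X 1 ^ (S.card - famRank F v S)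

lemma finrank_map_of_disjoint {F : Type*} [Field F] {M N : Type*} [AddCommGroup M] [Module F M]
    [AddCommGroup N] [Module F N] (f : M →ₗ[F] N) (W : Submodule F M)
    (h : Disjoint W (LinearMap.ker f)) :
    Module.finrank F (W.map f) = Module.finrank F W := by
  rw [← LinearMap.range_domRestrict]
  have hinj : Function.Injective (f.domRestrict W) :=
    LinearMap.injective_domRestrict_iff.mpr h
  exact (LinearEquiv.finrank_eq (LinearEquiv.ofInjective _ hinj)).symm

lemma statement10_aux {F : Type*} [Field F] {N : Type*} [AddCommGroup N] [Module F N]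
    [FiniteDimensional F N] {E : Type*} [Fintype E] [DecidableEq E] (v : E → N) (σ : E)
    (hbridge : famRank F v (Finset.univ.erase σ) + 1
      = famRank F v (Finset.univ : Finset E)) :
    famTutte F v = (X 0 + 1) * famTutte F (fun τ : {x : E // x ≠ σ} =>
        (Submodule.span F {v σ}).mkQ (v (τ : E))) := by
  classical
  set K : Submodule F N := Submodule.span F {v σ} with hK
  set e : ℕ := famRank F v (Finset.univ.erase σ) with he
  have hins : (Finset.univ : Finset E) = insert σ (Finset.univ.erase σ) :=
    (Finset.insert_erase (Finset.mem_univ σ)).symm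
  -- v σ is not in the span of the other columns
  have hnotmem : v σ ∉ Submodule.span F (v '' ((Finset.univ.erase σ : Finset E) : Set E)) := by
    intro hmem
    have : famRank F v (Finset.univ : Finset E) = e := by
      rw [famRank, hins, Finset.coe_insert, Set.image_insert_eq,
        Submodule.span_insert_eq_span hmem]
      rfl
    omega
  have hσ0 : v σ ≠ 0 := fun h => hnotmem (h ▸ Submodule.zero_mem _)
  have hnot : ∀ T : Finset E, T ⊆ Finset.univ.erase σ →
      v σ ∉ Submodule.span F (v '' (T : Set E)) := fun T hT hmem =>
    hnotmem (Submodule.span_mono (Set.image_mono (Finset.coe_subset.mpr hT)) hmem)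
  -- rank of insert σ
  have hrank_insert : ∀ T : Finset E, T ⊆ Finset.univ.erase σ →
      famRank F v (insert σ T) = famRank F v T + 1 := by
    intro T hT
    have hdisj : Disjoint (Submodule.span F (v '' (T : Set E))) K :=
      (Submodule.disjoint_span_singleton' hσ0).mpr (hnot T hT)
    have hsp : Submodule.span F (v '' ((insert σ T : Finset E) : Set E))
        = Submodule.span F (v '' (T : Set E)) ⊔ K := by
      rw [Finset.coe_insert, Set.image_insert_eq, Submodule.span_insert, sup_comm]
    have hsum := Submodule.finrank_sup_add_finrank_inf_eq
      (Submodule.span F (v '' (T : Set E))) K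
    rw [hdisj.eq_bot, finrank_bot, add_zero, hK, finrank_span_singleton hσ0] at hsum
    rw [famRank, hsp, hsum]
    rfl
  -- rank bound
  have hrank_le : ∀ T : Finset E, T ⊆ Finset.univ.erase σ → famRank F v T ≤ e :=
    fun T hT => Submodule.finrank_mono
      (Submodule.span_mono (Set.image_mono (Finset.coe_subset.mpr hT)))
  -- embedding and its image
  set emb : {x : E // x ≠ σ} ↪ E := Function.Embedding.subtype _ with hemb
  have hmapsub : ∀ S : Finset {x : E // x ≠ σ}, S.map emb ⊆ Finset.univ.erase σ := by
    intro S x hx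
    rcases Finset.mem_map.mp hx with ⟨a, _, rfl⟩
    exact Finset.mem_erase.mpr ⟨a.2, Finset.mem_univ _⟩
  -- ranks in the quotient
  have hquot : ∀ S : Finset {x : E // x ≠ σ},
      famRank F (fun τ : {x : E // x ≠ σ} => K.mkQ (v (τ : E))) S
        = famRank F v (S.map emb) := by
    intro S
    have him : (fun τ : {x : E // x ≠ σ} => K.mkQ (v (τ : E))) '' (S : Set _)
        = K.mkQ '' (v '' ((S.map emb : Finset E) : Set E)) := by
      rw [Finset.coe_map, Set.image_image, Set.image_image]
      rfl
    rw [famRank, him, ← Submodule.map_span]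
    apply finrank_map_of_disjoint
    rw [Submodule.ker_mkQ]
    exact (Submodule.disjoint_span_singleton' hσ0).mpr (hnot _ (hmapsub S))
  have huniv_map : (Finset.univ : Finset {x : E // x ≠ σ}).map emb
      = Finset.univ.erase σ := by
    ext x
    simp [hemb, Finset.mem_map, Finset.mem_erase, Function.Embedding.subtype]
    exact ⟨by rintro ⟨a, b, rfl⟩; exact b, fun h => ⟨x, h, rfl⟩⟩
  have hwuniv : famRank F (fun τ : {x : E // x ≠ σ} => K.mkQ (v (τ : E)))
      (Finset.univ : Finset {x : E // x ≠ σ}) = e := by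
    rw [hquot, huniv_map]
  -- rewrite LHS
  have hbridge' : famRank F v (Finset.univ : Finset E) = e + 1 := hbridge.symm
  have hL : famTutte F v = ∑ T ∈ (Finset.univ.erase σ).powerset,
      (X 0 ^ (e + 1 - famRank F v T) * X 1 ^ (T.card - famRank F v T)
        + X (0 : Fin 2) ^ (e + 1 - famRank F v (insert σ T))
          * X 1 ^ ((insert σ T).card - famRank F v (insert σ T))) := by
    rw [famTutte]
    simp only [hbridge']
    rw [← Finset.powerset_univ, hins,
      Finset.sum_powerset_insert (Finset.notMem_erase σ _), ← Finset.sum_add_distrib,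
      Finset.erase_insert (Finset.notMem_erase σ _)]
  -- rewrite RHS sum
  have hR : famTutte F (fun τ : {x : E // x ≠ σ} => K.mkQ (v (τ : E)))
      = ∑ T ∈ (Finset.univ.erase σ).powerset,
        X 0 ^ (e - famRank F v T) * X 1 ^ (T.card - famRank F v T) := by
    rw [famTutte]
    refine Finset.sum_bij (fun S _ => S.map emb) (fun S _ => Finset.mem_powerset.mpr (hmapsub S))
      (fun S₁ _ S₂ _ h => Finset.map_injective emb h) (fun T hT => ?_) (fun S _ => ?_)
    · refine ⟨T.subtype (· ≠ σ), Finset.mem_univ _, ?_⟩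
      show Finset.map emb (T.subtype (· ≠ σ)) = T
      rw [hemb, Finset.subtype_map]
      exact Finset.filter_true_of_mem (fun x hx =>
        (Finset.mem_erase.mp (Finset.mem_powerset.mp hT hx)).1)
    · rw [hquot, huniv_map, ← he, hquot S, Finset.card_map]
  rw [hL, hR, Finset.mul_sum]
  refine Finset.sum_congr rfl (fun T hT => ?_)
  have hTsub : T ⊆ Finset.univ.erase σ := Finset.mem_powerset.mp hT
  have hr : famRank F v T ≤ e := hrank_le T hTsub
  have hσT : σ ∉ T := fun h => (Finset.mem_erase.mp (hTsub h)).1 rfl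
  rw [hrank_insert T hTsub, Finset.card_insert_of_notMem hσT,
    Nat.succ_sub hr, Nat.succ_sub_succ, Nat.succ_sub_succ, pow_succ]
  ring

/-- if `σ ∈ E` is a bridge of `D` (`r(E ∖ {σ}) = r(E) − 1`, i.e.
`r(E ∖ {σ}) + 1 = r(E)`), then `T_D(X,Y) = (X + 1) · T_{D/σ}(X,Y)`, where `D/σ` is the
contraction of `D` by `σ`: the columns `E ∖ {σ}` of `D` composed with the quotient map
`F^m → F^m / span(Dσ)`. -/
theorem statement10 {F : Type*} [Field F] {m E : Type*} [Fintype m] [Fintype E]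
    [DecidableEq E] (D : Matrix m E F) (σ : E)
    (hbridge : famRank F (fun τ i => D i τ) (Finset.univ.erase σ) + 1
      = famRank F (fun τ i => D i τ) (Finset.univ : Finset E)) :
    famTutte F (fun τ i => D i τ)
      = (X 0 + 1) * famTutte F (fun τ : {x : E // x ≠ σ} =>
          (Submodule.span F {fun i => D i σ}).mkQ (fun i => D i (τ : E))) := by
  exact statement10_aux (fun τ i => D i τ) σ hbridge
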